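/- Let C ≤ F_q^n be an LRC with dimension k and locality r. Then for all 1 ≤ i ≤ k, μ_i(C) ≥ ⌈(k - (i-1))/r⌉, where μ_i(C) := min{t : d_t(C^⊥) ≥ k - i + 1 + t}. -/

import Mathlib

open Finset

variable {F : Type*} [Field F] [Fintype F] [DecidableEq F]

/-- Hamming weight of a vector. -/
def wt {n : ℕ} (x : Fin n → F) : ℕ := (Finset.univ.filter fun i => x i ≠ 0).card

/-- Support of a vector, as a finset. -/
def supp {n : ℕ} (x : Fin n → F) : Finset (Fin n) := Finset.univ.filter fun i => x i ≠ 0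

/-- The dual code with respect to the standard bilinear form. -/
def dualCode {ι : Type*} [Fintype ι] (C : Submodule F (ι → F)) : Submodule F (ι → F) where
  carrier := {x | ∀ y ∈ C, ∑ i, x i * y i = 0}
  add_mem' := by
    intro a b ha hb y hy
    simp only [Set.mem_setOf_eq] at *
    simp only [Pi.add_apply, add_mul, Finset.sum_add_distrib, ha y hy, hb y hy, add_zero]
  zero_mem' := by intro y hy; simp
  smul_mem' := by
    intro c a ha y hy
    simp only [Set.mem_setOf_eq] at *
    simp only [Pi.smul_apply, smul_eq_mul, mul_assoc, ← Finset.mul_sum, ha y hy, mul_zero]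

/-- Refined weight enumerator `W_i^S(C)`. -/
noncomputable def W {n : ℕ} (C : Submodule F (Fin n → F)) (i : ℕ) (S : Finset (Fin n)) : ℕ :=
  Set.ncard {x : Fin n → F | x ∈ C ∧ wt x = i ∧ S ⊆ supp x}

/-- Shortening of a code to a set of coordinates. -/
def shortening {ι : Type*} [Fintype ι] (C : Submodule F (ι → F)) (S : Finset ι) :
    Submodule F (ι → F) where
  carrier := {x | x ∈ C ∧ ∀ i, i ∉ S → x i = 0}
  add_mem' := by
    rintro a b ⟨ha, ha0⟩ ⟨hb, hb0⟩
    exact ⟨C.add_mem ha hb, fun i hi => by simp [ha0 i hi, hb0 i hi]⟩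
  zero_mem' := ⟨C.zero_mem, fun i _ => rfl⟩
  smul_mem' := by
    rintro c a ⟨ha, ha0⟩
    exact ⟨C.smul_mem c ha, fun i hi => by simp [ha0 i hi]⟩

/-- Projection (puncturing) onto the coordinates indexed by `S`. -/
def projMap {ι : Type*} [Fintype ι] (S : Finset ι) : (ι → F) →ₗ[F] ({ i // i ∈ S } → F) :=
  LinearMap.funLeft F F Subtype.val

/-- The `i`-th generalized Hamming weight of a code. -/
noncomputable def genWeight {n : ℕ} (C : Submodule F (Fin n → F)) (i : ℕ) : ℕ :=
  sInf {w | ∃ D : Submodule F (Fin n → F), D ≤ C ∧ Module.finrank F D = i ∧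
    Set.ncard {j : Fin n | ∃ x ∈ D, x j ≠ 0} = w}

/-- A code is nondegenerate if no coordinate vanishes identically. -/
def Nondegenerate {n : ℕ} (C : Submodule F (Fin n → F)) : Prop :=
  ∀ i : Fin n, ∃ x ∈ C, x i ≠ 0

/-- A code has locality `r`. -/
def HasLocality {n : ℕ} (C : Submodule F (Fin n → F)) (r : ℕ) : Prop :=
  ∀ i : Fin n, ∃ S : Finset (Fin n), i ∉ S ∧ S.card ≤ r ∧
    ∀ x ∈ C, ∀ y ∈ C, (∀ j ∈ S, x j = y j) → x i = y i

/-- A nondegenerate code has locality `(r, δ)`. -/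
def HasLocalityRD {n : ℕ} (C : Submodule F (Fin n → F)) (r δ : ℕ) : Prop :=
  (∀ i : Fin n, ∃ x ∈ C, x i ≠ 0) ∧
  ∀ i : Fin n, ∃ S : Finset (Fin n), i ∉ S ∧ S.card ≤ r + δ ∧
    ∀ x ∈ C, (∃ j ∈ insert i S, x j ≠ 0) →
      δ ≤ ((insert i S).filter fun j => x j ≠ 0).card

open Module

lemma mem_dualCode {n : ℕ} {C : Submodule F (Fin n → F)} {x : Fin n → F} :
    x ∈ dualCode C ↔ ∀ y ∈ C, ∑ j, x j * y j = 0 := Iff.rfl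

lemma aux_toDual_pi {n : ℕ} (x y : Fin n → F) :
    (Pi.basisFun F (Fin n)).toDual x y = ∑ j, x j * y j := by
  conv_lhs => rw [← (Pi.basisFun F (Fin n)).sum_repr y]
  rw [map_sum]
  simp only [map_smul, smul_eq_mul, Basis.toDual_apply_left, Pi.basisFun_repr]
  exact Finset.sum_congr rfl fun j _ => mul_comm _ _

lemma finrank_dualCode {n : ℕ} (C : Submodule F (Fin n → F)) :
    finrank F (dualCode C) = n - finrank F C := by
  classical
  have hmap : dualCode C =
      (Submodule.dualAnnihilator C).comap (Pi.basisFun F (Fin n)).toDualEquiv.toLinearMap := by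
    ext x
    simp only [Submodule.mem_comap, LinearEquiv.coe_coe, Basis.toDualEquiv_apply,
      Submodule.mem_dualAnnihilator, mem_dualCode]
    constructor
    · intro hx y hy; rw [aux_toDual_pi]; exact hx y hy
    · intro hx y hy; have := hx y hy; rwa [aux_toDual_pi] at this
  rw [hmap, Submodule.comap_equiv_eq_map_symm, LinearEquiv.finrank_map_eq]
  have h1 := Submodule.finrank_quotient_add_finrank C
  have h2 : finrank F ((Fin n → F) ⧸ C) = finrank F (Submodule.dualAnnihilator C) :=
    (Subspace.quotEquivAnnihilator C).finrank_eq
  have h3 : finrank F (Fin n → F) = n := Module.finrank_fin_fun F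
  omega

lemma exists_dual_local {n r : ℕ} {C : Submodule F (Fin n → F)} (hloc : HasLocality C r)
    (i : Fin n) : ∃ h, h ∈ dualCode C ∧ h i = 1 ∧ wt h ≤ r + 1 := by
  classical
  obtain ⟨S, hiS, hcard, hdet⟩ := hloc i
  let π : C →ₗ[F] ({j // j ∈ S} → F) := (projMap S).comp C.subtype
  let φ : C →ₗ[F] F := (LinearMap.proj i).comp C.subtype
  have hker : LinearMap.ker π ≤ LinearMap.ker φ := by
    intro z hz
    have h0 : ∀ j ∈ S, (z : Fin n → F) j = (0 : Fin n → F) j := by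
      intro j hj
      have hz0 : π z = 0 := hz
      have := congrFun hz0 ⟨j, hj⟩
      simpa [π, projMap, LinearMap.funLeft] using this
    have := hdet (z : Fin n → F) z.2 0 C.zero_mem h0
    simpa [φ] using this
  let ψ0 : (C ⧸ LinearMap.ker π) →ₗ[F] F := (LinearMap.ker π).liftQ φ hker
  let e := π.quotKerEquivRange
  obtain ⟨ψ, hψ⟩ := LinearMap.exists_extend (ψ0.comp e.symm.toLinearMap)
  have hψπ : ∀ x : C, ψ (π x) = φ x := by
    intro x
    have hmem : π x ∈ LinearMap.range π := LinearMap.mem_range_self π x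
    have h1 : ψ (π x) = (ψ.comp (LinearMap.range π).subtype) ⟨π x, hmem⟩ := rfl
    rw [hψ] at h1
    have h2 : e.symm ⟨π x, hmem⟩ = Submodule.Quotient.mk x := by
      rw [LinearEquiv.symm_apply_eq]
      exact (Subtype.ext (π.quotKerEquivRange_apply_mk x)).symm
    rw [h1]
    show ψ0 (e.symm ⟨π x, hmem⟩) = φ x
    rw [h2]
    exact Submodule.liftQ_apply _ _ _
  set c : {j // j ∈ S} → F := fun s => ψ (Pi.single s 1) with hc
  let h : Fin n → F := fun j =>
    if j = i then 1 else if hj : j ∈ S then -(c ⟨j, hj⟩) else 0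
  have hhi : h i = 1 := by simp [h]
  have hsupp : ∀ j, h j ≠ 0 → j ∈ insert i S := by
    intro j hj
    by_contra hcon
    simp only [Finset.mem_insert, not_or] at hcon
    simp [h, hcon.1, hcon.2] at hj
  have hwt : wt h ≤ r + 1 := by
    have hsub : (Finset.univ.filter fun j => h j ≠ 0) ⊆ insert i S := fun j hj =>
      hsupp j (Finset.mem_filter.mp hj).2
    calc wt h ≤ (insert i S).card := Finset.card_le_card hsub
      _ ≤ S.card + 1 := Finset.card_insert_le _ _
      _ ≤ r + 1 := Nat.add_le_add_right hcard 1
  refine ⟨h, ?_, hhi, hwt⟩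
  intro y hy
  have hψy : ψ (π ⟨y, hy⟩) = y i := hψπ ⟨y, hy⟩
  have hψ_expand : ∀ v : {j // j ∈ S} → F, ψ v = ∑ s : {j // j ∈ S}, v s * c s := by
    intro v
    conv_lhs => rw [← Finset.univ_sum_single v]
    rw [map_sum]
    refine Finset.sum_congr rfl fun s _ => ?_
    have hsingle : Pi.single (M := fun _ : {j // j ∈ S} => F) s (v s) =
        v s • Pi.single (M := fun _ : {j // j ∈ S} => F) s 1 := by
      rw [← Pi.single_smul, smul_eq_mul, mul_one]
    rw [hsingle, map_smul, smul_eq_mul, hc]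
  have hexp : ψ (π ⟨y, hy⟩) = ∑ s : {j // j ∈ S}, y s * c s := hψ_expand _
  have h1 : ∑ j ∈ insert i S, h j * y j = ∑ j, h j * y j :=
    Finset.sum_subset (Finset.subset_univ _) (fun j _ hj => by
      have hz : h j = 0 := by by_contra hcon; exact hj (hsupp j hcon)
      simp [hz])
  show ∑ j, h j * y j = 0
  rw [← h1, Finset.sum_insert hiS, hhi, one_mul]
  have h2 : ∑ j ∈ S, h j * y j = ∑ s : {j // j ∈ S}, h s * y s :=
    (Finset.sum_coe_sort S _).symm
  have h3 : ∀ s : {j // j ∈ S}, h (s : Fin n) = -(c s) := by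
    intro s
    have hne : (s : Fin n) ≠ i := fun hh => hiS (hh ▸ s.2)
    simp [h, hne, s.2]
  have h4 : ∑ s : {j // j ∈ S}, h (s : Fin n) * y s = -∑ s : {j // j ∈ S}, y s * c s := by
    rw [← Finset.sum_neg_distrib]
    exact Finset.sum_congr rfl fun s _ => by rw [h3]; ring
  rw [h2, h4, ← hexp, hψy]
  ring

lemma greedy_bound {n r : ℕ} {C' : Submodule F (Fin n → F)}
    (hdual : ∀ j : Fin n, ∃ h ∈ C', h j ≠ 0 ∧ wt h ≤ r + 1) :
    ∀ t, t ≤ Module.finrank F C' → ∃ D : Submodule F (Fin n → F), D ≤ C' ∧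
      Module.finrank F D = t ∧ Set.ncard {j : Fin n | ∃ x ∈ D, x j ≠ 0} ≤ t * (r + 1) := by
  intro t
  induction t with
  | zero =>
    intro _
    refine ⟨⊥, bot_le, finrank_bot F _, ?_⟩
    have hset : {j : Fin n | ∃ x ∈ (⊥ : Submodule F (Fin n → F)), x j ≠ 0} = ∅ := by
      ext j; simp [Submodule.mem_bot]
    simp [hset]
  | succ t ih =>
    intro ht
    obtain ⟨D, hDC, hDr, hDs⟩ := ih (by omega)
    have step : ∀ h : Fin n → F, h ∈ C' → h ∉ D →
        ∃ D' : Submodule F (Fin n → F), D' ≤ C' ∧ Module.finrank F D' = t + 1 ∧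
          {j : Fin n | ∃ x ∈ D', x j ≠ 0} ⊆
            {j : Fin n | ∃ x ∈ D, x j ≠ 0} ∪ {j : Fin n | h j ≠ 0} := by
      intro h hhC hhD
      have hh0 : h ≠ 0 := fun hcon => hhD (hcon ▸ D.zero_mem)
      refine ⟨D ⊔ (F ∙ h), sup_le hDC ((Submodule.span_singleton_le_iff_mem h C').mpr hhC),
        ?_, ?_⟩
      · have hint : D ⊓ (F ∙ h) = ⊥ := by
          rw [eq_bot_iff]
          rintro x ⟨hxD, hxh⟩
          obtain ⟨a, rfl⟩ := Submodule.mem_span_singleton.mp hxh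
          rcases eq_or_ne a 0 with rfl | ha
          · simp
          · exfalso
            apply hhD
            have := D.smul_mem a⁻¹ hxD
            rwa [smul_smul, inv_mul_cancel₀ ha, one_smul] at this
        have hsum := Submodule.finrank_sup_add_finrank_inf_eq D (F ∙ h)
        rw [hint, finrank_bot, finrank_span_singleton hh0, hDr] at hsum
        clear * - hsum
        omega
      · intro j hj
        obtain ⟨x, hx, hxj⟩ := hj
        obtain ⟨d, hd, e, he, rfl⟩ := Submodule.mem_sup.mp hx
        obtain ⟨a, rfl⟩ := Submodule.mem_span_singleton.mp he
        by_cases hdj : d j = 0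
        · right
          have hne : a * h j ≠ 0 := by simpa [hdj] using hxj
          exact fun hcon => hne (by simp [hcon])
        · left; exact ⟨d, hd, hdj⟩
    by_cases hcov : {j : Fin n | ∃ x ∈ D, x j ≠ 0} = Set.univ
    · have hDne : D ≠ C' := fun hcon => by rw [hcon] at hDr; clear * - hDr ht; omega
      obtain ⟨h, hhC, hhD⟩ := SetLike.exists_of_lt (lt_of_le_of_ne hDC hDne)
      obtain ⟨D', hD'C, hD'r, hD's⟩ := step h hhC hhD
      refine ⟨D', hD'C, hD'r, ?_⟩
      calc {j : Fin n | ∃ x ∈ D', x j ≠ 0}.ncard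
          ≤ (Set.univ : Set (Fin n)).ncard :=
            Set.ncard_le_ncard (Set.subset_univ _) Set.finite_univ
        _ ≤ t * (r + 1) := hcov ▸ hDs
        _ ≤ (t + 1) * (r + 1) := Nat.mul_le_mul_right _ (Nat.le_succ t)
    · obtain ⟨j, hj⟩ := (Set.ne_univ_iff_exists_notMem _).mp hcov
      obtain ⟨h, hhC, hhj, hwt⟩ := hdual j
      have hhD : h ∉ D := fun hm => hj ⟨h, hm, hhj⟩
      obtain ⟨D', hD'C, hD'r, hD's⟩ := step h hhC hhD
      refine ⟨D', hD'C, hD'r, ?_⟩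
      have hwt' : {j : Fin n | h j ≠ 0}.ncard = wt h := by
        rw [wt, ← Set.ncard_coe_finset]
        congr 1
        ext j'; simp
      calc {j : Fin n | ∃ x ∈ D', x j ≠ 0}.ncard
          ≤ ({j : Fin n | ∃ x ∈ D, x j ≠ 0} ∪ {j : Fin n | h j ≠ 0}).ncard :=
            Set.ncard_le_ncard hD's (Set.toFinite _)
        _ ≤ {j : Fin n | ∃ x ∈ D, x j ≠ 0}.ncard + {j : Fin n | h j ≠ 0}.ncard :=
            Set.ncard_union_le _ _
        _ ≤ t * (r + 1) + (r + 1) := Nat.add_le_add hDs (hwt'.le.trans hwt)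
        _ = (t + 1) * (r + 1) := by ring
/-- for an LRC of dimension `k` and locality `r`,
`μ_i(C) ≥ ⌈(k - (i-1))/r⌉` for `1 ≤ i ≤ k`. -/
theorem stmt15 {n : ℕ} (C : Submodule F (Fin n → F)) (k r i : ℕ)
    (hloc : HasLocality C r) (hk : Module.finrank F C = k)
    (hi1 : 1 ≤ i) (hik : i ≤ k) :
    ⌈((k : ℚ) - ((i : ℚ) - 1)) / (r : ℚ)⌉ ≤
      ((sInf {t : ℕ | k - i + 1 + t ≤ genWeight (dualCode C) t} : ℕ) : ℤ) := by
  classical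
  have hnF : finrank F (Fin n → F) = n := Module.finrank_fin_fun F
  have hkn : k ≤ n := by
    have := Submodule.finrank_le C
    clear * - this hnF hk
    omega
  -- r = 0 is impossible
  rcases Nat.eq_zero_or_pos r with rfl | hr
  · exfalso
    have hC : C = ⊥ := by
      rw [eq_bot_iff]
      intro x hx
      have hx0 : ∀ j, x j = 0 := by
        intro j
        obtain ⟨S, hjS, hcard, hdet⟩ := hloc j
        have hS : S = ∅ := Finset.card_eq_zero.mp (Nat.le_zero.mp hcard)
        have := hdet x hx 0 C.zero_mem (fun j' hj' => absurd hj' (by simp [hS]))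
        simpa using this
      have : x = 0 := funext hx0
      simp [this]
    rw [hC, finrank_bot] at hk
    clear * - hk hi1 hik
    omega
  set C' := dualCode C with hC'def
  have hC'rank : finrank F C' = n - k := by rw [hC'def, finrank_dualCode, hk]
  have hdual : ∀ j : Fin n, ∃ h ∈ C', h j ≠ 0 ∧ wt h ≤ r + 1 := by
    intro j
    obtain ⟨h, hh, hj1, hwt⟩ := exists_dual_local hloc j
    exact ⟨h, hh, by rw [hj1]; exact one_ne_zero, hwt⟩
  have hndeg : {j : Fin n | ∃ x ∈ C', x j ≠ 0} = Set.univ := by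
    ext j
    simp only [Set.mem_univ, iff_true, Set.mem_setOf_eq]
    obtain ⟨h, hh, hj, -⟩ := hdual j
    exact ⟨h, hh, hj⟩
  have hncard_univ : (Set.univ : Set (Fin n)).ncard = n := by
    rw [Set.ncard_univ, Nat.card_eq_fintype_card, Fintype.card_fin]
  have hgw : genWeight C' (n - k) = n := by
    rw [genWeight]
    have hset : {w | ∃ D : Submodule F (Fin n → F), D ≤ C' ∧ finrank F D = n - k ∧
        Set.ncard {j : Fin n | ∃ x ∈ D, x j ≠ 0} = w} = {n} := by
      ext w
      simp only [Set.mem_setOf_eq, Set.mem_singleton_iff]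
      constructor
      · rintro ⟨D, hDC, hDr, rfl⟩
        have hD : D = C' := Submodule.eq_of_le_of_finrank_eq hDC (by rw [hDr, hC'rank])
        rw [hD, hndeg, hncard_univ]
      · rintro rfl
        exact ⟨C', le_rfl, hC'rank, by rw [hndeg, hncard_univ]⟩
    rw [hset, csInf_singleton]
  set T := {t : ℕ | k - i + 1 + t ≤ genWeight C' t} with hT
  have hTmem : n - k ∈ T := by
    simp only [hT, Set.mem_setOf_eq, hgw]
    clear * - hkn hi1 hik
    omega
  have hsInf : sInf T ∈ T := Nat.sInf_mem ⟨_, hTmem⟩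
  have hkey : k - i + 1 ≤ r * sInf T := by
    set t := sInf T with htdef
    have ht : k - i + 1 + t ≤ genWeight C' t := hsInf
    have hne : {w | ∃ D : Submodule F (Fin n → F), D ≤ C' ∧ finrank F D = t ∧
        Set.ncard {j : Fin n | ∃ x ∈ D, x j ≠ 0} = w}.Nonempty := by
      by_contra hcon
      rw [Set.not_nonempty_iff_eq_empty] at hcon
      have : genWeight C' t = 0 := by rw [genWeight, hcon, Nat.sInf_empty]
      rw [this] at ht
      clear * - ht
      omega
    obtain ⟨w, D, hDC, hDr, -⟩ := hne
    have htle : t ≤ finrank F C' := by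
      have := Submodule.finrank_mono (R := F) hDC
      rw [hDr] at this
      clear * - this
      omega
    obtain ⟨D', hD'C, hD'r, hD's⟩ := greedy_bound hdual t htle
    have hle : genWeight C' t ≤ t * (r + 1) := by
      have hmem : Set.ncard {j : Fin n | ∃ x ∈ D', x j ≠ 0} ∈
          {w | ∃ D : Submodule F (Fin n → F), D ≤ C' ∧ finrank F D = t ∧
            Set.ncard {j : Fin n | ∃ x ∈ D, x j ≠ 0} = w} := ⟨D', hD'C, hD'r, rfl⟩
      exact le_trans (Nat.sInf_le hmem) hD's
    have hexp : t * (r + 1) = t * r + t := by ring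
    have hfin := le_trans ht hle
    have hcomm : t * r = r * t := Nat.mul_comm t r
    clear * - hexp hfin hcomm
    omega
  rw [Int.ceil_le]
  have hcast : (k : ℚ) - ((i : ℚ) - 1) = ((k - i + 1 : ℕ) : ℚ) := by
    rw [Nat.cast_add, Nat.cast_sub hik]
    push_cast
    ring
  rw [hcast, div_le_iff₀ (by exact_mod_cast hr)]
  calc ((k - i + 1 : ℕ) : ℚ) ≤ ((r * sInf T : ℕ) : ℚ) := by exact_mod_cast hkey
    _ = (((sInf T : ℕ) : ℤ) : ℚ) * (r : ℚ) := by push_cast; ring
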